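/- Suppose the optimal routing step function r*(y) takes value a_k on the interval [τ_{k-1}, τ_k), where the sampling water level for route a_k is β_k = Λ - μ_{a_k} with Λ = λ* + c*E_max, and suppose that at y = τ_k the newly optimal route a_{k+1} satisfies μ_{a_{k+1}} < μ_{a_k} and that the derivative identity dQ(y,a_k)/dy = Λ - y holds for y < β_k. Then β_k < τ_k for every k ≤ K, where K+1 is the number of route segments. -/
import Mathlib


/-- The sampling threshold lies strictly below the routing threshold: if the
action values `Q(y,r) = -((Λ - μ_r - y)⁺)²/2 + yμ_r + c_r` of routes `a_k` and
`a_{k+1}` (with `μ_{a_{k+1}} < μ_{a_k}`) cross at `τ_k > 0` while route `a_k` is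
strictly better below `τ_k`, then `β_k = Λ - μ_{a_k} < τ_k`. -/
theorem stmt7 (Λ : ℝ) (μ c : ℕ → ℝ) (ak ak1 : ℕ) (τ : ℝ)
    (hμpos : ∀ r, 0 < μ r) (hμ : μ ak1 < μ ak) (hτ : 0 < τ)
    (Q : ℝ → ℕ → ℝ)
    (hQ : ∀ y r, Q y r = -(max 0 (Λ - μ r - y)) ^ 2 / 2 + y * μ r + c r)
    (hcross : Q τ ak = Q τ ak1)
    (hopt : ∀ y, 0 ≤ y → y < τ → Q y ak < Q y ak1) :
    Λ - μ ak < τ := by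
  by_contra h
  push_neg at h
  have h0 := hopt 0 le_rfl hτ
  rw [hQ, hQ] at h0 hcross
  have e1 : max 0 (Λ - μ ak - τ) = Λ - μ ak - τ := max_eq_right (by linarith)
  have e2 : max 0 (Λ - μ ak1 - τ) = Λ - μ ak1 - τ := max_eq_right (by linarith)
  have e3 : max 0 (Λ - μ ak - 0) = Λ - μ ak - 0 := max_eq_right (by linarith)
  have e4 : max 0 (Λ - μ ak1 - 0) = Λ - μ ak1 - 0 := max_eq_right (by linarith)
  rw [e1, e2] at hcross
  rw [e3, e4] at h0
  nlinarith [hcross, h0]
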